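/- If an everywhere absolutely convergent Dirichlet series \sum_{n=1}^\infty b_n n^{-s} (with not all b_n zero and at least two nonzero coefficients b_m, b_n with m \ne n) equals e^{\rho} e^{-\lambda s} for all s \in \mathbb{C} for some \lambda \ge 0 and \rho \in \mathbb{C}, then a contradiction follows; i.e., a Dirichlet series with at least two nonzero terms cannot be of the form e^{\rho - \lambda s}. -/

import Mathlib

open Filter Topology

/-- For a natural base, complex power with real exponent is the coercion of a real power. -/
lemma cpow_real_eq (k : ℕ) (x : ℝ) :
    ((k + 1 : ℕ) : ℂ) ^ (-(x : ℂ)) = ((((k : ℝ) + 1) ^ (-x) : ℝ) : ℂ) := by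
  rw [show ((k + 1 : ℕ) : ℂ) = ((((k : ℝ) + 1) : ℝ) : ℂ) by push_cast; ring,
    show (-(x : ℂ)) = (((-x : ℝ)) : ℂ) by push_cast; ring,
    ← Complex.ofReal_cpow (by positivity)]

lemma cpow_real_eq' (k : ℕ) (x : ℝ) :
    ((k + 1 : ℕ) : ℂ) ^ ((x : ℂ)) = ((((k : ℝ) + 1) ^ x : ℝ) : ℂ) := by
  rw [show ((k + 1 : ℕ) : ℂ) = ((((k : ℝ) + 1) : ℝ) : ℂ) by push_cast; ring,
    ← Complex.ofReal_cpow (by positivity)]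

/-- Key asymptotic lemma: if the coefficients below `j` vanish, then
`(j+1)^x * ∑ c k (k+1)^{-x} → c j` as `x → ∞`. -/
lemma aux_tendsto (c : ℕ → ℂ) (hs : Summable fun k => ‖c k‖) (j : ℕ)
    (hj : ∀ i < j, c i = 0) :
    Tendsto (fun x : ℝ => ((j + 1 : ℕ) : ℂ) ^ (x : ℂ) *
      ∑' k : ℕ, c k * ((k + 1 : ℕ) : ℂ) ^ (-(x : ℂ))) atTop (𝓝 (c j)) := by
  classical
  set r : ℕ → ℝ := fun k => ((j : ℝ) + 1) / ((k : ℝ) + 1) with hr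
  have hrpos : ∀ k : ℕ, 0 < r k := fun k => by positivity
  have key : ∀ (x : ℝ) (k : ℕ), ((j + 1 : ℕ) : ℂ) ^ (x : ℂ) *
      (c k * ((k + 1 : ℕ) : ℂ) ^ (-(x : ℂ))) = c k * ((r k ^ x : ℝ) : ℂ) := by
    intro x k
    rw [cpow_real_eq, cpow_real_eq', hr]
    rw [Real.div_rpow (by positivity) (by positivity), Real.rpow_neg (by positivity),
      div_eq_mul_inv]
    push_cast
    ring
  have hrw : ∀ x : ℝ, ((j + 1 : ℕ) : ℂ) ^ (x : ℂ) *
      ∑' k : ℕ, c k * ((k + 1 : ℕ) : ℂ) ^ (-(x : ℂ)) =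
      ∑' k : ℕ, c k * ((r k ^ x : ℝ) : ℂ) := by
    intro x
    rw [← tsum_mul_left]
    exact tsum_congr fun k => key x k
  have hg : (∑' k : ℕ, if k = j then c j else 0) = c j := tsum_ite_eq j (fun _ => c j)
  have hdct : Tendsto (fun x : ℝ => ∑' k : ℕ, c k * ((r k ^ x : ℝ) : ℂ)) atTop
      (𝓝 (∑' k : ℕ, if k = j then c j else 0)) := by
    apply tendsto_tsum_of_dominated_convergence (bound := fun k => ‖c k‖) hs
    · intro k
      rcases lt_trichotomy k j with hk | hk | hk
      · simp [hj k hk, hk.ne]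
      · subst hk
        have : ∀ x : ℝ, c k * ((r k ^ x : ℝ) : ℂ) = c k := by
          intro x
          have : r k = 1 := by
            rw [hr]; field_simp
          simp [this, Real.one_rpow]
        simp only [this]
        simp [tendsto_const_nhds]
      · have hlt : r k < 1 := by
          rw [hr, div_lt_one (by positivity)]
          have : (j : ℝ) < (k : ℝ) := by exact_mod_cast hk
          linarith
        have h0 : Tendsto (fun x : ℝ => r k ^ x) atTop (𝓝 0) :=
          tendsto_rpow_atTop_of_base_lt_one _ (by linarith [hrpos k]) hlt
        have : Tendsto (fun x : ℝ => c k * ((r k ^ x : ℝ) : ℂ)) atTop (𝓝 (c k * ((0 : ℝ) : ℂ))) :=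
          (Complex.continuous_ofReal.tendsto 0 |>.comp h0).const_mul (c k)
        simpa [hk.ne'] using this
    · filter_upwards [eventually_ge_atTop (0 : ℝ)] with x hx k
      rcases lt_or_ge k j with hk | hk
      · simp [hj k hk]
      · have hr1 : r k ≤ 1 := by
          rw [hr, div_le_one (by positivity)]
          have : (j : ℝ) ≤ (k : ℝ) := by exact_mod_cast hk
          linarith
        have hle : r k ^ x ≤ 1 := Real.rpow_le_one (le_of_lt (hrpos k)) hr1 hx
        have hnn : 0 ≤ r k ^ x := Real.rpow_nonneg (le_of_lt (hrpos k)) x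
        calc ‖c k * ((r k ^ x : ℝ) : ℂ)‖ = ‖c k‖ * |r k ^ x| := by
              rw [norm_mul, Complex.norm_real, Real.norm_eq_abs]
          _ = ‖c k‖ * (r k ^ x) := by rw [abs_of_nonneg hnn]
          _ ≤ ‖c k‖ * 1 := by
              apply mul_le_mul_of_nonneg_left hle (norm_nonneg _)
          _ = ‖c k‖ := mul_one _
  rw [hg] at hdct
  simpa only [hrw] using hdct

/-- An everywhere absolutely convergent Dirichlet series with at least two
nonzero coefficients cannot equal `exp(ρ - λ s)` for all `s`. -/
theorem stmt_2 (b : ℕ → ℂ)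
    (hconv : ∀ x : ℝ, Summable (fun n : ℕ => ‖b (n + 1)‖ * ((n + 1 : ℕ) : ℝ) ^ (-x)))
    (m n : ℕ) (hm : 1 ≤ m) (hmn : m < n) (hbm : b m ≠ 0) (hbn : b n ≠ 0)
    (lam : ℝ) (hlam : 0 ≤ lam) (rho : ℂ)
    (heq : ∀ s : ℂ, (∑' k : ℕ, b (k + 1) * ((k + 1 : ℕ) : ℂ) ^ (-s)) =
      Complex.exp (rho - lam * s)) :
    False := by
  classical
  set c : ℕ → ℂ := fun k => b (k + 1) with hc
  have hs : Summable fun k => ‖c k‖ := by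
    have h := hconv 0
    simpa [neg_zero, Real.rpow_zero] using h
  have hcm : c (m - 1) ≠ 0 := by
    simpa [hc, Nat.sub_add_cancel hm] using hbm
  have hex : ∃ k, c k ≠ 0 := ⟨m - 1, hcm⟩
  set m0 := Nat.find hex with hm0def
  have hm0 : c m0 ≠ 0 := Nat.find_spec hex
  have hm0min : ∀ i < m0, c i = 0 := fun i hi => not_not.mp (Nat.find_min hex hi)
  have hm0le : m0 ≤ m - 1 := Nat.find_min' hex hcm
  have hT : ∀ x : ℝ, (∑' k : ℕ, c k * ((k + 1 : ℕ) : ℂ) ^ (-(x : ℂ))) =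
      Complex.exp (rho - lam * x) := fun x => heq x
  have h1 := aux_tendsto c hs m0 hm0min
  set a : ℝ := Real.log ((m0 : ℝ) + 1) - lam with ha
  have h2 : ∀ x : ℝ, ((m0 + 1 : ℕ) : ℂ) ^ (x : ℂ) *
      ∑' k : ℕ, c k * ((k + 1 : ℕ) : ℂ) ^ (-(x : ℂ)) =
      Complex.exp (rho + ((a * x : ℝ) : ℂ)) := by
    intro x
    rw [hT x, cpow_real_eq' m0 x, Real.rpow_def_of_pos (by positivity),
      Complex.ofReal_exp, ← Complex.exp_add]
    congr 1
    simp only [ha]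
    push_cast
    ring
  simp only [h2] at h1
  -- compare with shift x ↦ x + 1
  have hshift : Tendsto (fun x : ℝ => Complex.exp (rho + ((a * (x + 1) : ℝ) : ℂ))) atTop
      (𝓝 (c m0)) := h1.comp (tendsto_atTop_add_const_right atTop 1 tendsto_id)
  have hshift' : ∀ x : ℝ, Complex.exp (rho + ((a * (x + 1) : ℝ) : ℂ)) =
      Complex.exp ((a : ℂ)) * Complex.exp (rho + ((a * x : ℝ) : ℂ)) := by
    intro x
    rw [← Complex.exp_add]
    congr 1
    push_cast
    ring
  simp only [hshift'] at hshift
  have hmul : Tendsto (fun x : ℝ => Complex.exp ((a : ℂ)) * Complex.exp (rho + ((a * x : ℝ) : ℂ)))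
      atTop (𝓝 (Complex.exp ((a : ℂ)) * c m0)) := h1.const_mul _
  have hea : Complex.exp ((a : ℂ)) * c m0 = c m0 := tendsto_nhds_unique hmul hshift
  have hea1 : Complex.exp ((a : ℂ)) = 1 :=
    mul_right_cancel₀ hm0 (by rw [one_mul]; exact hea)
  have ha0 : a = 0 := by
    rw [← Complex.ofReal_exp] at hea1
    have h1e : Real.exp a = 1 := by exact_mod_cast hea1
    have h2e : Real.exp a = Real.exp 0 := by rw [Real.exp_zero]; exact h1e
    exact Real.exp_injective h2e
  have hrho : c m0 = Complex.exp rho := by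
    have h1' : Tendsto (fun _ : ℝ => Complex.exp rho) atTop (𝓝 (c m0)) := by
      simpa [ha0] using h1
    exact tendsto_nhds_unique h1' tendsto_const_nhds
  have hlameq : lam = Real.log ((m0 : ℝ) + 1) := by
    have := ha0
    rw [ha] at this
    linarith
  -- Now the series equals its m0-th term everywhere
  have hTx : ∀ x : ℝ, (∑' k : ℕ, c k * ((k + 1 : ℕ) : ℂ) ^ (-(x : ℂ))) =
      c m0 * ((m0 + 1 : ℕ) : ℂ) ^ (-(x : ℂ)) := by
    intro x
    rw [hT x, hrho, cpow_real_eq m0 x, Real.rpow_def_of_pos (by positivity),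
      Complex.ofReal_exp, ← Complex.exp_add]
    congr 1
    rw [hlameq]
    push_cast
    ring
  set c' : ℕ → ℂ := Function.update c m0 0 with hc'
  have hc'le : ∀ k, ‖c' k‖ ≤ ‖c k‖ := by
    intro k
    by_cases hk : k = m0
    · subst hk; simp [hc']
    · simp [hc', Function.update_of_ne hk]
  have hs' : Summable fun k => ‖c' k‖ :=
    Summable.of_nonneg_of_le (fun k => norm_nonneg _) hc'le hs
  have hsum : ∀ x : ℝ, Summable (fun k : ℕ => c k * ((k + 1 : ℕ) : ℂ) ^ (-(x : ℂ))) := by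
    intro x
    apply Summable.of_norm
    have : ∀ k : ℕ, ‖c k * ((k + 1 : ℕ) : ℂ) ^ (-(x : ℂ))‖ =
        ‖c k‖ * ((k + 1 : ℕ) : ℝ) ^ (-x) := by
      intro k
      rw [cpow_real_eq, norm_mul, Complex.norm_real, Real.norm_eq_abs,
        abs_of_nonneg (Real.rpow_nonneg (by positivity) _)]
      congr 2
      push_cast
      ring
    simp only [this]
    exact hconv x
  have hT' : ∀ x : ℝ, (∑' k : ℕ, c' k * ((k + 1 : ℕ) : ℂ) ^ (-(x : ℂ))) = 0 := by
    intro x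
    have heq1 : (∑' k : ℕ, c k * ((k + 1 : ℕ) : ℂ) ^ (-(x : ℂ))) =
        c m0 * ((m0 + 1 : ℕ) : ℂ) ^ (-(x : ℂ)) +
        ∑' k : ℕ, if k = m0 then 0 else c k * ((k + 1 : ℕ) : ℂ) ^ (-(x : ℂ)) :=
      Summable.tsum_eq_add_tsum_ite (hsum x) m0
    have heq2 : (∑' k : ℕ, c' k * ((k + 1 : ℕ) : ℂ) ^ (-(x : ℂ))) =
        ∑' k : ℕ, if k = m0 then 0 else c k * ((k + 1 : ℕ) : ℂ) ^ (-(x : ℂ)) := by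
      apply tsum_congr
      intro k
      by_cases hk : k = m0
      · subst hk; simp [hc']
      · simp [hc', Function.update_of_ne hk, hk]
    rw [heq2]
    have := heq1
    rw [hTx x] at this
    linear_combination -this
  have hn1 : 1 ≤ n := le_of_lt (lt_of_le_of_lt hm hmn)
  have hne : (n - 1) ≠ m0 := by omega
  have hcn : c' (n - 1) ≠ 0 := by
    rw [hc', Function.update_of_ne hne]
    simpa [hc, Nat.sub_add_cancel hn1] using hbn
  have hex' : ∃ k, c' k ≠ 0 := ⟨n - 1, hcn⟩
  set n0 := Nat.find hex' with hn0def
  have hn0 : c' n0 ≠ 0 := Nat.find_spec hex'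
  have hn0min : ∀ i < n0, c' i = 0 := fun i hi => not_not.mp (Nat.find_min hex' hi)
  have h3 := aux_tendsto c' hs' n0 hn0min
  simp only [hT', mul_zero] at h3
  exact hn0 (tendsto_nhds_unique h3 tendsto_const_nhds)
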